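/- If (𝔤,[,],a) is a pseudo-Riemannian Lie algebra and the form a is definite (positive or negative definite), and 𝔤 is 3-dimensional and nilpotent nonabelian (hence isomorphic to the Heisenberg algebra), a contradiction arises; equivalently, no 3-dimensional nonabelian nilpotent Lie algebra admits a compatible definite form. -/

import Mathlib

/-- No 3-dimensional nonabelian nilpotent real Lie algebra admits a compatible definite
form making it a pseudo-Riemannian Lie algebra. -/
theorem stmt_16 (G : Type*) [LieRing G] [LieAlgebra ℝ G] [FiniteDimensional ℝ G]
    (hdim : Module.finrank ℝ G = 3)
    (hnilp : LieRing.IsNilpotent G)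
    (hnonab : ¬ ∀ u v : G, ⁅u, v⁆ = 0)
    (a : LinearMap.BilinForm ℝ G)
    (hsymm : ∀ u v : G, a u v = a v u)
    (hdef : (∀ u : G, u ≠ 0 → 0 < a u u) ∨ (∀ u : G, u ≠ 0 → a u u < 0))
    (A : G → G → G)
    (hA : ∀ u v w : G, 2 * a (A u v) w = a ⁅u, v⁆ w + a ⁅w, u⁆ v + a ⁅w, v⁆ u)
    (hcompat : ∀ u v w : G, ⁅A u v, w⁆ + ⁅u, A w v⁆ = 0) :
    False := by
  -- definiteness gives: a u u = 0 → u = 0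
  have hdef' : ∀ u : G, a u u = 0 → u = 0 := by
    intro u hu
    by_contra h
    rcases hdef with h1 | h1
    · exact absurd hu (ne_of_gt (h1 u h))
    · exact absurd hu (ne_of_lt (h1 u h))
  push_neg at hnonab
  obtain ⟨x, y, hxy⟩ := hnonab
  -- find a nonzero central element z lying in the derived algebra (lcs 1)
  have hex : ∃ k, LieModule.lowerCentralSeries ℝ G G k = ⊥ := (LieModule.isNilpotent_iff ℝ G G).1 hnilp
  classical
  set k := Nat.find hex with hk
  have hkbot : LieModule.lowerCentralSeries ℝ G G k = ⊥ := Nat.find_spec hex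
  have hk2 : 2 ≤ k := by
    by_contra h
    push_neg at h
    interval_cases k
    · have : (⊤ : LieSubmodule ℝ G G) = ⊥ := by simpa using hkbot
      have hx0 : x = 0 := by
        have : x ∈ (⊥ : LieSubmodule ℝ G G) := this ▸ LieSubmodule.mem_top x
        simpa using this
      exact hxy (by simp [hx0])
    · have hmem : ⁅x, y⁆ ∈ LieModule.lowerCentralSeries ℝ G G 1 := by
        rw [LieModule.lowerCentralSeries_succ]
        exact LieSubmodule.lie_mem_lie (LieSubmodule.mem_top x) (LieSubmodule.mem_top y)
      rw [hkbot] at hmem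
      exact hxy (by simpa using hmem)
  have hprev : LieModule.lowerCentralSeries ℝ G G (k - 1) ≠ ⊥ :=
    Nat.find_min hex (by omega)
  obtain ⟨z, hzmem, hz0⟩ :
      ∃ z : G, z ∈ LieModule.lowerCentralSeries ℝ G G (k - 1) ∧ z ≠ 0 := by
    rcases (LieSubmodule.nontrivial_iff_ne_bot ℝ G G).2 hprev with h
    obtain ⟨⟨z, hz⟩, ⟨w, hw⟩, hne⟩ := h
    by_cases h0 : z = 0
    · exact ⟨w, hw, fun hw0 => hne (by simp [Subtype.ext_iff, h0, hw0])⟩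
    · exact ⟨z, hz, h0⟩
  -- z is central
  have hzc : ∀ w : G, ⁅z, w⁆ = 0 := by
    intro w
    have hmem : ⁅w, z⁆ ∈ LieModule.lowerCentralSeries ℝ G G k := by
      have : k = (k - 1) + 1 := by omega
      rw [this, LieModule.lowerCentralSeries_succ]
      exact LieSubmodule.lie_mem_lie (LieSubmodule.mem_top w) hzmem
    rw [hkbot] at hmem
    have : ⁅w, z⁆ = 0 := by simpa using hmem
    rw [← lie_skew, this, neg_zero]
  -- z lies in the derived algebra
  have hzd : z ∈ LieModule.lowerCentralSeries ℝ G G 1 := by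
    have h := LieModule.antitone_lowerCentralSeries ℝ G G (show 1 ≤ k - 1 by omega)
    exact h hzmem
  -- A z u is central, for every u
  have hAzc : ∀ u w : G, ⁅A z u, w⁆ = 0 := by
    intro u w
    have h := hcompat z u w
    rw [hzc (A w u), add_zero] at h
    exact h
  -- a (A z u) w = 0 whenever w is central
  have hAz0 : ∀ u : G, A z u = 0 := by
    intro u
    apply hdef'
    have h := hA z u (A z u)
    rw [hzc u, hAzc u z, hAzc u u] at h
    simp only [map_zero, LinearMap.zero_apply] at h
    linarith
  -- hence the derived algebra is orthogonal to z
  have horth : ∀ u w : G, a ⁅w, u⁆ z = 0 := by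
    intro u w
    have h := hA u z w
    have hz' : ⁅u, z⁆ = (0 : G) := by rw [← lie_skew, hzc u, neg_zero]
    have hw' : ⁅w, z⁆ = (0 : G) := by rw [← lie_skew, hzc w, neg_zero]
    -- A u z = A z u = 0 (torsion-free at the level of a-values)
    have htor : ∀ w' : G, a (A u z) w' = a (A z u) w' := by
      intro w'
      have h1 := hA u z w'
      have h2 := hA z u w'
      have : a ⁅u, z⁆ w' = a ⁅z, u⁆ w' := by rw [hz', hzc u]
      linarith
    have hA0 : a (A u z) w = 0 := by
      rw [htor w, hAz0 u]
      simp
    rw [hz', hw'] at h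
    simp only [map_zero, LinearMap.zero_apply] at h
    linarith [hA0]
  -- but z is in the span of brackets, so a z z = 0, contradiction
  have hspan : a z z = 0 := by
    have hzd' : z ∈ Submodule.span ℝ
        { m : G | ∃ x' ∈ (⊤ : LieIdeal ℝ G), ∃ n ∈ LieModule.lowerCentralSeries ℝ G G 0, ⁅x', n⁆ = m } := by
      have h := hzd
      rw [LieModule.lowerCentralSeries_succ] at h
      rw [← LieSubmodule.mem_toSubmodule, LieSubmodule.lieIdeal_oper_eq_linear_span'] at h
      exact h
    have : a z z = 0 := by
      have key : ∀ m ∈ Submodule.span ℝ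
          { m : G | ∃ x' ∈ (⊤ : LieIdeal ℝ G), ∃ n ∈ LieModule.lowerCentralSeries ℝ G G 0, ⁅x', n⁆ = m },
          a m z = 0 := by
        intro m hm
        induction hm using Submodule.span_induction with
        | mem m hmem =>
          obtain ⟨x', -, n, -, rfl⟩ := hmem
          exact horth n x'
        | zero => simp
        | add p q _ _ hp hq => rw [map_add, LinearMap.add_apply, hp, hq, add_zero]
        | smul c p _ hp => rw [map_smul, LinearMap.smul_apply, hp, smul_zero]
      rw [hsymm z z] at *
      exact hsymm z z ▸ key z hzd'
    exact this
  exact hz0 (hdef' z hspan)
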